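/- Let q : Fin 4 × Fin 4 → ℝ be nonnegative with total sum 1. Define ACE = q(2,2)+q(1,1)−q(1,2)−q(2,1), γ = (q(0,1)+q(1,1)+q(2,1)+q(3,1)) − (q(0,2)+q(1,2)+q(2,2)+q(3,2)), a = q(0,0)+q(0,1)+q(1,0)+q(1,1), d = q(2,1)+q(2,3)+q(3,1)+q(3,3), and e = Σ_i (q(i,0)+q(i,2)). If γ > min(2d + a, e + d), then ACE > 0. -/
import Mathlib


/- Strong-surrogate potential-outcome-type model: `q (i, j)` is the proportion of the
type with `(S_{T=0}, S_{T=1})` given by the binary expansion of `i` and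
`(Y_{S=0}, Y_{S=1})` given by the binary expansion of `j`. -/

/-- `P(Y=0, S=0 | T=0)` -/
noncomputable def pA (q : Fin 4 × Fin 4 → ℝ) : ℝ := q (0, 0) + q (0, 1) + q (1, 0) + q (1, 1)

/-- `P(Y=1, S=0 | T=0)` -/
noncomputable def pB (q : Fin 4 × Fin 4 → ℝ) : ℝ := q (0, 2) + q (0, 3) + q (1, 2) + q (1, 3)

/-- `P(Y=0, S=1 | T=0)` -/
noncomputable def pC (q : Fin 4 × Fin 4 → ℝ) : ℝ := q (2, 0) + q (2, 2) + q (3, 0) + q (3, 2)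

/-- `P(Y=1, S=1 | T=0)` -/
noncomputable def pD (q : Fin 4 × Fin 4 → ℝ) : ℝ := q (2, 1) + q (2, 3) + q (3, 1) + q (3, 3)

/-- `P(S=0 | T=1)` -/
noncomputable def pE (q : Fin 4 × Fin 4 → ℝ) : ℝ :=
  q (0, 0) + q (0, 1) + q (0, 2) + q (0, 3) + q (2, 0) + q (2, 1) + q (2, 2) + q (2, 3)

/-- `γ = ACE(S → Y)` -/
noncomputable def gam (q : Fin 4 × Fin 4 → ℝ) : ℝ :=
  (q (0, 1) + q (1, 1) + q (2, 1) + q (3, 1)) - (q (0, 2) + q (1, 2) + q (2, 2) + q (3, 2))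

/-- `ACE(T → Y)` -/
noncomputable def ace (q : Fin 4 × Fin 4 → ℝ) : ℝ := q (2, 2) + q (1, 1) - q (1, 2) - q (2, 1)

theorem stmt4 (q : Fin 4 × Fin 4 → ℝ) (hq : ∀ p, 0 ≤ q p)
    (hsum : ∑ p : Fin 4 × Fin 4, q p = 1)
    (hcrit : gam q > min (2 * pD q + pA q) (pE q + pD q)) :
    ace q > 0 := by
  unfold gam pA pD pE ace at *
  rcases min_lt_iff.mp hcrit with h | h
  · linarith [hq (0,0), hq (1,0), hq (0,2), hq (1,2), hq (2,2), hq (3,2),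
      hq (2,1), hq (3,1), hq (2,3), hq (3,3)]
  · linarith [hq (0,0), hq (0,2), hq (0,3), hq (1,2), hq (2,0), hq (2,1),
      hq (2,2), hq (2,3), hq (3,2), hq (3,3)]
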